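/- Let (V_N) be a sequence of positive reals that is slowly varying in the sense of Karamata (i.e., V_{⌊λN⌋}/V_N → 1 as N → ∞ for every λ > 0) and diverges to infinity. Then there exists a sequence of positive integers M_N tending to infinity such that V_{⌊N·M_N⌋}/V_N → 1 and V_N/V_{⌊N/M_N⌋} → 1 as N → ∞. -/

import Mathlib

open Filter

/-- A positive sequence `V` slowly varying in the sense of Karamata and diverging to
infinity admits a sequence `M_N → ∞` of positive integers such that
`V_{N·M_N}/V_N → 1` and `V_N/V_{⌊N/M_N⌋} → 1`. -/
theorem exists_slowly_growing_M
    (V : ℕ → ℝ) (hpos : ∀ N, 0 < V N)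
    (hslow : ∀ l : ℝ, 0 < l →
      Tendsto (fun N : ℕ => V ⌊l * N⌋₊ / V N) atTop (nhds 1))
    (hdiv : Tendsto V atTop atTop) :
    ∃ M : ℕ → ℕ, (∀ N, 0 < M N) ∧ Tendsto M atTop atTop ∧
      Tendsto (fun N => V (N * M N) / V N) atTop (nhds 1) ∧
      Tendsto (fun N => V N / V (N / M N)) atTop (nhds 1) := by
  classical
  set Q : ℕ → ℕ → Prop := fun k n =>
    |V (n * (k + 1)) / V n - 1| < 1 / ((k : ℝ) + 1) ∧
    |V n / V (n / (k + 1)) - 1| < 1 / ((k : ℝ) + 1) with hQdef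
  have key : ∀ k : ℕ, ∃ nk : ℕ, ∀ n ≥ nk, Q k n := by
    intro k
    have hk1 : (0 : ℝ) < (k : ℝ) + 1 := by positivity
    have ha : Tendsto (fun n : ℕ => V (n * (k + 1)) / V n) atTop (nhds 1) := by
      refine (hslow ((k : ℝ) + 1) hk1).congr (fun n => ?_)
      have h1 : ((k : ℝ) + 1) * (n : ℕ) = (((k + 1) * n : ℕ) : ℝ) := by push_cast; ring
      rw [h1, Nat.floor_natCast, Nat.mul_comm]
    have hb : Tendsto (fun n : ℕ => V n / V (n / (k + 1))) atTop (nhds 1) := by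
      have hb1 : Tendsto (fun n : ℕ => V (n / (k + 1)) / V n) atTop (nhds 1) := by
        refine (hslow (1 / ((k : ℝ) + 1)) (by positivity)).congr (fun n => ?_)
        have h1 : (1 / ((k : ℝ) + 1)) * (n : ℕ) = (n : ℝ) / ((k + 1 : ℕ) : ℝ) := by
          push_cast; ring
        rw [h1, Nat.floor_div_natCast, Nat.floor_natCast]
      have := hb1.inv₀ one_ne_zero
      simp only [inv_div, inv_one] at this
      exact this
    have hε : (0 : ℝ) < 1 / ((k : ℝ) + 1) := by positivity
    obtain ⟨N1, hN1⟩ := Metric.tendsto_atTop.mp ha (1 / ((k : ℝ) + 1)) hε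
    obtain ⟨N2, hN2⟩ := Metric.tendsto_atTop.mp hb (1 / ((k : ℝ) + 1)) hε
    refine ⟨max N1 N2, fun n hn => ?_⟩
    constructor
    · have := hN1 n (le_trans (le_max_left _ _) hn)
      rwa [Real.dist_eq] at this
    · have := hN2 n (le_trans (le_max_right _ _) hn)
      rwa [Real.dist_eq] at this
  choose nk hnk using key
  -- build increasing thresholds
  let t : ℕ → ℕ := fun k => Nat.rec (motive := fun _ => ℕ) (nk 0) (fun k ih => max (ih + 1) (nk (k + 1))) k
  have ht_nk : ∀ k, nk k ≤ t k := by
    intro k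
    cases k with
    | zero => exact le_refl _
    | succ k => exact le_max_right _ _
  have ht_mono : ∀ k, t k < t (k + 1) := by
    intro k
    exact lt_of_lt_of_le (Nat.lt_succ_self _) (le_max_left _ _)
  have ht_self : ∀ k, k ≤ t k := by
    intro k
    induction k with
    | zero => exact Nat.zero_le _
    | succ k ih => exact lt_of_le_of_lt ih (ht_mono k)
  have htQ : ∀ k n, t k ≤ n → Q k n := fun k n h => hnk k n (le_trans (ht_nk k) h)
  -- the diagonal sequence
  set G : ℕ → ℕ := fun n => @Nat.findGreatest (fun k => t k ≤ n) (fun _ => Nat.decLe _ _) n with hGdef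
  refine ⟨fun n => G n + 1, fun n => Nat.succ_pos _, ?_, ?_, ?_⟩
  · -- tendsto atTop
    rw [tendsto_atTop]
    intro b
    rw [eventually_atTop]
    refine ⟨t b, fun n hn => ?_⟩
    have : b ≤ G n := @Nat.le_findGreatest b (fun k => t k ≤ n) (fun _ => Nat.decLe _ _) n (le_trans (ht_self b) hn) hn
    omega
  · -- first limit
    rw [Metric.tendsto_atTop]
    intro ε hε
    obtain ⟨k, hk⟩ := exists_nat_one_div_lt hε
    refine ⟨max (t k) (t 0), fun n hn => ?_⟩
    have h0 : t 0 ≤ n := le_trans (le_max_right _ _) hn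
    have hGspec : t (G n) ≤ n := @Nat.findGreatest_spec 0 (fun k => t k ≤ n) (fun _ => Nat.decLe _ _) n (Nat.zero_le n) h0
    have hQn := htQ (G n) n hGspec
    have hGk : k ≤ G n :=
      @Nat.le_findGreatest k (fun k => t k ≤ n) (fun _ => Nat.decLe _ _) n
        (le_trans (ht_self k) (le_trans (le_max_left _ _) hn))
        (le_trans (le_max_left _ _) hn)
    have hle : 1 / ((G n : ℝ) + 1) ≤ 1 / ((k : ℝ) + 1) := by
      apply one_div_le_one_div_of_le (by positivity)
      exact_mod_cast Nat.succ_le_succ hGk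
    rw [Real.dist_eq]
    calc |V (n * (G n + 1)) / V n - 1| < 1 / ((G n : ℝ) + 1) := hQn.1
      _ ≤ 1 / ((k : ℝ) + 1) := hle
      _ < ε := hk
  · -- second limit
    rw [Metric.tendsto_atTop]
    intro ε hε
    obtain ⟨k, hk⟩ := exists_nat_one_div_lt hε
    refine ⟨max (t k) (t 0), fun n hn => ?_⟩
    have h0 : t 0 ≤ n := le_trans (le_max_right _ _) hn
    have hGspec : t (G n) ≤ n := @Nat.findGreatest_spec 0 (fun k => t k ≤ n) (fun _ => Nat.decLe _ _) n (Nat.zero_le n) h0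
    have hQn := htQ (G n) n hGspec
    have hGk : k ≤ G n :=
      @Nat.le_findGreatest k (fun k => t k ≤ n) (fun _ => Nat.decLe _ _) n
        (le_trans (ht_self k) (le_trans (le_max_left _ _) hn))
        (le_trans (le_max_left _ _) hn)
    have hle : 1 / ((G n : ℝ) + 1) ≤ 1 / ((k : ℝ) + 1) := by
      apply one_div_le_one_div_of_le (by positivity)
      exact_mod_cast Nat.succ_le_succ hGk
    rw [Real.dist_eq]
    calc |V n / V (n / (G n + 1)) - 1| < 1 / ((G n : ℝ) + 1) := hQn.2
      _ ≤ 1 / ((k : ℝ) + 1) := hle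
      _ < ε := hk
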